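/- Let R be a unital associative ring and δ : R → R a derivation. For every non-zero two-sided ideal I of the differential polynomial ring R[x;id_R,δ], one has I ∩ Z(R)' ≠ {0}, where Z(R)' denotes the centralizer of the center Z(R) of R in R[x;id_R,δ]. -/

import Mathlib

/-- `δ` is a `σ`-derivation of `R`: it is additive and satisfies the twisted Leibniz rule
`δ(ab) = σ(a)δ(b) + δ(a)b`. -/
def IsSigmaDerivation {R : Type*} [Ring R] (σ : R →+* R) (δ : R → R) : Prop :=
  (∀ a b : R, δ (a + b) = δ a + δ b) ∧ ∀ a b : R, δ (a * b) = σ a * δ b + δ a * b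

/-- `S`, together with the ring morphism `f : R →+* S` and the element `x : S`, is an Ore
extension `R[x;σ,δ]`: the powers `1, x, x², …` form a basis of `S` as a left `R`-module
(i.e. every element of `S` is, in a unique way, a finite sum `Σᵢ f(aᵢ) xⁱ`), and the
commutation rule `x·r = σ(r)·x + δ(r)` holds for all `r ∈ R`. -/
structure IsOreExtension {R S : Type*} [Ring R] [Ring S]
    (σ : R →+* R) (δ : R → R) (f : R →+* S) (x : S) : Prop where
  basis : Function.Bijective fun a : ℕ →₀ R => a.sum fun i r => f r * x ^ i
  rel : ∀ r : R, x * f r = f (σ r) * x + f (δ r)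

/-- `R` is `σ`-`δ`-simple: the only two-sided ideals `J` of `R` with `σ(J) ⊆ J` and
`δ(J) ⊆ J` are `{0}` and `R`. -/
def IsSigmaDeltaSimple {R : Type*} [Ring R] (σ : R →+* R) (δ : R → R) : Prop :=
  ∀ J : TwoSidedIdeal R, (∀ a ∈ J, σ a ∈ J) → (∀ a ∈ J, δ a ∈ J) → J = ⊥ ∨ J = ⊤

/-- `R` is `δ`-simple: the only two-sided ideals `J` of `R` with `δ(J) ⊆ J` are `{0}`
and `R`. -/
def IsDeltaSimple {R : Type*} [Ring R] (δ : R → R) : Prop :=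
  ∀ J : TwoSidedIdeal R, (∀ a ∈ J, δ a ∈ J) → J = ⊥ ∨ J = ⊤

/-- Every non-zero two-sided ideal of `R[x;id,δ]` intersects the centralizer of `Z(R)`
in `R[x;id,δ]` non-trivially. -/

private def Tdeg {R S : Type*} [Ring R] [Ring S] (f : R →+* S) (x : S) (n : ℕ) :
    AddSubgroup S :=
  AddSubgroup.closure {s | ∃ r i, i < n ∧ s = f r * x ^ i}

section aux
variable {R S : Type*} [Ring R] [Ring S] {δ : R → R} {f : R →+* S} {x : S}

private lemma Tdeg_gen {r : R} {i n : ℕ} (h : i < n) : f r * x ^ i ∈ Tdeg f x n :=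
  AddSubgroup.subset_closure ⟨r, i, h, rfl⟩

private lemma Tdeg_mono {m n : ℕ} (h : m ≤ n) : Tdeg f x m ≤ Tdeg f x n :=
  AddSubgroup.closure_mono fun s ⟨r, i, hi, hs⟩ => ⟨r, i, lt_of_lt_of_le hi h, hs⟩

private lemma Tdeg_zero : Tdeg f x 0 = ⊥ := by
  have : {s | ∃ r : R, ∃ i, i < 0 ∧ s = f r * x ^ i} = (∅ : Set S) := by
    ext s; simp
  simp [Tdeg, this]

private lemma Tdeg_mul_left {n : ℕ} (r : R) {s : S} (hs : s ∈ Tdeg f x n) :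
    f r * s ∈ Tdeg f x n := by
  induction hs using AddSubgroup.closure_induction with
  | mem s hs =>
      obtain ⟨c, i, hi, rfl⟩ := hs
      rw [← mul_assoc, ← map_mul]
      exact Tdeg_gen hi
  | zero => simpa using (Tdeg f x n).zero_mem
  | add a b _ _ ha hb => rw [mul_add]; exact add_mem ha hb
  | neg a _ ha => rw [mul_neg]; exact neg_mem ha

private lemma Tdeg_x_mul {n : ℕ} (hrel : ∀ r : R, x * f r = f r * x + f (δ r)) {s : S}
    (hs : s ∈ Tdeg f x n) : x * s ∈ Tdeg f x (n + 1) := by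
  induction hs using AddSubgroup.closure_induction with
  | mem s hs =>
      obtain ⟨c, i, hi, rfl⟩ := hs
      rw [← mul_assoc, hrel, add_mul, mul_assoc, ← pow_succ']
      exact add_mem (Tdeg_gen (by omega)) (Tdeg_gen (by omega))
  | zero => simpa using (Tdeg f x (n + 1)).zero_mem
  | add a b _ _ ha hb => rw [mul_add]; exact add_mem ha hb
  | neg a _ ha => rw [mul_neg]; exact neg_mem ha

private lemma Tdeg_pow_comm (hrel : ∀ r : R, x * f r = f r * x + f (δ r)) (z : R) (i : ℕ) :
    x ^ i * f z - f z * x ^ i ∈ Tdeg f x i := by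
  induction i with
  | zero => simp [Tdeg_zero]
  | succ i ih =>
      have key : x ^ (i + 1) * f z - f z * x ^ (i + 1)
          = x * (x ^ i * f z - f z * x ^ i) + (x * f z - f z * x) * x ^ i := by
        rw [pow_succ']
        simp only [mul_sub, sub_mul, mul_assoc]
        abel
      have hxz : x * f z - f z * x = f (δ z) := by rw [hrel]; abel
      rw [key, hxz]
      exact add_mem (Tdeg_x_mul hrel ih) (Tdeg_gen (by omega))

private lemma Tdeg_comm (hrel : ∀ r : R, x * f r = f r * x + f (δ r)) {n : ℕ} {s : S}
    (hs : s ∈ Tdeg f x (n + 1)) {z : R} (hz : z ∈ Subring.center R) :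
    s * f z - f z * s ∈ Tdeg f x n := by
  induction hs using AddSubgroup.closure_induction with
  | mem s hs =>
      obtain ⟨c, i, hi, rfl⟩ := hs
      have h1 : f c * x ^ i * f z - f z * (f c * x ^ i)
          = f c * (x ^ i * f z - f z * x ^ i) + (f (c * z) - f (z * c)) * x ^ i := by
        simp only [map_mul, mul_sub, sub_mul, mul_assoc]
        abel
      have h2 : c * z = z * c := Subring.mem_center_iff.mp hz c
      rw [h1, h2, sub_self, zero_mul, add_zero]
      exact Tdeg_mono (by omega) (Tdeg_mul_left c (Tdeg_pow_comm hrel z i))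
  | zero => simpa using (Tdeg f x n).zero_mem
  | add a b _ _ ha hb =>
      have : (a + b) * f z - f z * (a + b) = (a * f z - f z * a) + (b * f z - f z * b) := by
        noncomm_ring
      rw [this]; exact add_mem ha hb
  | neg a _ ha =>
      have : (-a) * f z - f z * (-a) = -(a * f z - f z * a) := by noncomm_ring
      rw [this]; exact neg_mem ha

private lemma Tdeg_exists
    (hsurj : Function.Surjective fun a : ℕ →₀ R => a.sum fun i r => f r * x ^ i) (s : S) :
    ∃ n, s ∈ Tdeg f x n := by
  obtain ⟨a, rfl⟩ := hsurj s
  refine ⟨a.support.sup id + 1, AddSubgroup.sum_mem _ fun i hi => ?_⟩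
  exact Tdeg_gen (Nat.lt_succ_of_le (Finset.le_sup (f := id) hi))

end aux

theorem stmt_11 {R S : Type*} [Ring R] [Ring S] (δ : R → R)
    (hδ : IsSigmaDerivation (RingHom.id R) δ) (f : R →+* S) (x : S)
    (hS : IsOreExtension (RingHom.id R) δ f x)
    (I : TwoSidedIdeal S) (hI : I ≠ ⊥) :
    ∃ s : S, s ∈ I ∧ s ≠ 0 ∧
      s ∈ Subring.centralizer (f '' (Subring.center R : Set R)) := by
  classical
  have hrel : ∀ r : R, x * f r = f r * x + f (δ r) := by
    intro r
    simpa using hS.rel r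
  have hsurj := hS.basis.surjective
  have hex : ∃ n : ℕ, ∃ s : S, s ∈ I ∧ s ≠ 0 ∧ s ∈ Tdeg f x n := by
    have : ∃ s : S, s ∈ I ∧ s ≠ 0 := by
      by_contra h
      push_neg at h
      exact hI (le_antisymm (fun s hs => by rw [TwoSidedIdeal.mem_bot]; exact h s hs) bot_le)
    obtain ⟨s0, hs0I, hs0⟩ := this
    obtain ⟨m, hm⟩ := Tdeg_exists hsurj s0
    exact ⟨m, s0, hs0I, hs0, hm⟩
  obtain ⟨s, hsI, hs, hsT⟩ := Nat.find_spec hex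
  set n := Nat.find hex with hn
  refine ⟨s, hsI, hs, ?_⟩
  rw [Subring.mem_centralizer_iff]
  rintro y ⟨z, hz, rfl⟩
  by_contra hne
  have hcI : s * f z - f z * s ∈ I :=
    I.sub_mem (I.mul_mem_right _ _ hsI) (I.mul_mem_left _ _ hsI)
  have hn0 : n ≠ 0 := by
    intro h
    rw [h, Tdeg_zero] at hsT
    exact hs (by simpa using hsT)
  obtain ⟨k, hk⟩ := Nat.exists_eq_succ_of_ne_zero hn0
  have hcT : s * f z - f z * s ∈ Tdeg f x k := Tdeg_comm hrel (by rwa [hk] at hsT) hz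
  exact Nat.find_min hex (show k < n by omega)
    ⟨_, hcI, sub_ne_zero.mpr fun h => hne h.symm, hcT⟩
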